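/- Let L/F be an extension with no proper finite intermediate extension. Suppose S is an F-subspace of L of dimension s ≥ 2, and A is a 2-dimensional subspace with basis {1, a} such that dim(AS) = dim(S) + 1 ≤ dim_F(L) − 1. Then there exists g ∈ S such that {g, ga, …, g a^{s−1}} is a basis of S. -/

import Mathlib

open Module Submodule Polynomial

-- powers linearly independent given no small annihilating polynomial
lemma aux_pow_li {F L : Type*} [Field F] [Field L] [Algebra F L] (a : L) (s : ℕ)
    (h : ∀ p : F[X], p.degree < (s : ℕ) → aeval a p = 0 → p = 0) :
    LinearIndependent F fun i : Fin s => a ^ (i : ℕ) := by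
  refine Fintype.linearIndependent_iff.2 fun g hg i => ?_
  simp_rw [Algebra.smul_def, ← aeval_monomial, ← map_sum] at hg
  have hdeg : (∑ i : Fin s, monomial (i : ℕ) (g i)).degree < (s : ℕ) := by
    simp_rw [← C_mul_X_pow_eq_monomial]
    exact degree_sum_fin_lt _
  have h0 := h _ hdeg hg
  apply_fun lcoeff F i at h0
  simp only [map_sum, lcoeff_apply, coeff_monomial, Fin.val_eq_val, Finset.sum_ite_eq',
    Finset.mem_univ, if_true, map_zero] at h0
  exact h0

-- key dimension step
lemma aux_step {F M : Type*} [Field F] [AddCommGroup M] [Module F M]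
    (U V₁ V₂ : Submodule F M) (f : M →ₗ[F] M)
    [FiniteDimensional F U] [FiniteDimensional F V₂]
    (hV : V₁ ≤ V₂) (hf : ∀ x ∈ U, f x ∈ V₂)
    (hd : finrank F V₂ ≤ finrank F V₁ + 1) :
    finrank F U ≤ finrank F ↥(U ⊓ V₁.comap f) + 1 := by
  haveI : FiniteDimensional F ↥(V₂.map V₁.mkQ) := Module.Finite.map _ _
  -- quotient image dimension
  have hq : finrank F ↥(V₂.map V₁.mkQ) ≤ 1 := by
    set ψ : ↥V₂ →ₗ[F] M ⧸ V₁ := V₁.mkQ ∘ₗ V₂.subtype with hψ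
    have hker : LinearMap.ker ψ = V₁.comap V₂.subtype := by
      ext x
      simp [hψ, LinearMap.mem_ker, Submodule.Quotient.mk_eq_zero]
    have hrange : LinearMap.range ψ = V₂.map V₁.mkQ := by
      rw [hψ, LinearMap.range_comp, Submodule.range_subtype]
    have h1 := LinearMap.finrank_range_add_finrank_ker ψ
    rw [hker, hrange] at h1
    have h2 : finrank F ↥(V₁.comap V₂.subtype) = finrank F V₁ :=
      (Submodule.comapSubtypeEquivOfLe hV).finrank_eq
    omega
  set φ : ↥U →ₗ[F] M ⧸ V₁ := V₁.mkQ ∘ₗ f ∘ₗ U.subtype with hφ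
  have hker : LinearMap.ker φ = (U ⊓ V₁.comap f).comap U.subtype := by
    ext x
    simp only [hφ, LinearMap.mem_ker, LinearMap.coe_comp, Function.comp_apply,
      Submodule.coe_subtype, Submodule.mkQ_apply, Submodule.Quotient.mk_eq_zero,
      Submodule.mem_comap, Submodule.mem_inf]
    exact ⟨fun h => ⟨x.2, h⟩, fun h => h.2⟩
  have hrange : LinearMap.range φ ≤ V₂.map V₁.mkQ := by
    rintro y ⟨x, rfl⟩
    exact ⟨f x, hf x x.2, rfl⟩
  have h1 := LinearMap.finrank_range_add_finrank_ker φ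
  rw [hker] at h1
  have h2 : finrank F ↥((U ⊓ V₁.comap f).comap U.subtype) = finrank F ↥(U ⊓ V₁.comap f) :=
    (Submodule.comapSubtypeEquivOfLe inf_le_left).finrank_eq
  have h3 : finrank F ↥(LinearMap.range φ) ≤ finrank F ↥(V₂.map V₁.mkQ) :=
    Submodule.finrank_mono hrange
  omega

theorem stmt2 {F L : Type*} [Field F] [Field L] [Algebra F L]
    (hL : ∀ K : IntermediateField F L, FiniteDimensional F ↥K → K = ⊥ ∨ K = ⊤)
    (S : Submodule F L) [FiniteDimensional F ↥S] (s : ℕ)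
    (hs : finrank F ↥S = s) (h2 : 2 ≤ s)
    (a : L) (A : Submodule F L) (hA : A = span F {1, a})
    (hdA : finrank F ↥A = 2)
    (hAS : finrank F ↥(A * S) = s + 1)
    (hup : ((s + 2 : ℕ) : Cardinal) ≤ Module.rank F L) :
    ∃ g ∈ S, ∃ b : Basis (Fin s) F ↥S, ∀ i : Fin s, (b i : L) = g * a ^ (i : ℕ) := by
  classical
  -- a is not in the image of F
  have haF : a ∉ Set.range (algebraMap F L) := by
    rintro ⟨c, rfl⟩
    have hle : A ≤ span F {(1 : L)} := by
      rw [hA, span_le]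
      rintro x (rfl | rfl)
      · exact subset_span rfl
      · rw [show algebraMap F L c = c • (1 : L) by simp [Algebra.smul_def]]
        exact smul_mem _ _ (subset_span rfl)
    have : finrank F ↥A ≤ finrank F ↥(span F {(1 : L)}) :=
      Submodule.finrank_mono hle
    rw [hdA, finrank_span_singleton (one_ne_zero)] at this
    omega
  -- no nonzero polynomial of degree < s annihilates a
  have hpoly : ∀ p : F[X], p.degree < (s : ℕ) → aeval a p = 0 → p = 0 := by
    intro p hdeg hev
    by_contra hp
    have halg : IsAlgebraic F a := ⟨p, hp, hev⟩
    have hint : IsIntegral F a := halg.isIntegral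
    haveI : FiniteDimensional F ↥(IntermediateField.adjoin F {a}) :=
      IntermediateField.adjoin.finiteDimensional hint
    rcases hL _ this with hbot | htop
    · exact haF (by
        have := IntermediateField.mem_adjoin_simple_self F a
        rw [hbot] at this
        exact (IntermediateField.mem_bot).1 this)
    · -- L is finite dimensional with finrank = natDegree of minpoly
      have hfr : finrank F ↥(IntermediateField.adjoin F {a}) = (minpoly F a).natDegree :=
        IntermediateField.adjoin.finrank hint
      haveI hFD : FiniteDimensional F ↥(⊤ : IntermediateField F L) := htop ▸ this
      haveI hLfin : FiniteDimensional F L :=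
        LinearEquiv.finiteDimensional
          ((IntermediateField.topEquiv (F := F) (E := L)).toLinearEquiv :
            ↥(⊤ : IntermediateField F L) ≃ₗ[F] L)
      have hfr2 : (minpoly F a).natDegree = finrank F L := by
        rw [← hfr, htop]
        exact (IntermediateField.topEquiv (F := F) (E := L)).toLinearEquiv.finrank_eq
      have hup2 : ((s + 2 : ℕ) : Cardinal) ≤ ((finrank F L : ℕ) : Cardinal) := by
        rwa [Module.finrank_eq_rank]
      have hlow' : s + 2 ≤ (minpoly F a).natDegree := by
        rw [hfr2]
        exact_mod_cast hup2
      have := minpoly.degree_le_of_ne_zero F a hp hev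
      have hds : (minpoly F a).degree < (s : ℕ) := lt_of_le_of_lt this hdeg
      have : (minpoly F a).natDegree < s := by
        have hne : minpoly F a ≠ 0 := minpoly.ne_zero hint
        exact_mod_cast (degree_eq_natDegree hne) ▸ hds
      omega
  have hpow : LinearIndependent F fun i : Fin s => a ^ (i : ℕ) := aux_pow_li a s hpoly
  -- submodules
  haveI : FiniteDimensional F ↥(A * S) := Module.finite_of_finrank_pos (R := F) (M := ↥(A * S)) (by rw [hAS]; omega)
  have hSAS : S ≤ A * S := by
    intro x hx
    have h1 : (1 : L) ∈ A := hA ▸ subset_span (Set.mem_insert 1 _)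
    simpa using Submodule.mul_mem_mul h1 hx
  have haA : a ∈ A := hA ▸ subset_span (Set.mem_insert_of_mem _ rfl)
  set P : ℕ → Submodule F L := fun i => S.comap (LinearMap.mulLeft F (a ^ i)) with hP
  set T : ℕ → Submodule F L := fun k => (Finset.range (k + 1)).inf P with hT
  have hTle : ∀ k i, i ≤ k → T k ≤ P i := fun k i hik =>
    Finset.inf_le (Finset.mem_range.2 (Nat.lt_succ_of_le hik))
  have hP0 : P 0 = S := by
    simp [hP, pow_zero, LinearMap.mulLeft_one, Submodule.comap_id]
  have hT0 : T 0 = S := by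
    rw [hT]
    show (Finset.range 1).inf P = S
    rw [Finset.range_one, Finset.inf_singleton, hP0]
  have hTS : ∀ k, T k ≤ S := fun k => hP0 ▸ hTle k 0 (Nat.zero_le _)
  have hTfin : ∀ k, FiniteDimensional F ↥(T k) := fun k =>
    Submodule.finiteDimensional_of_le (hTS k)
  have hTsucc : ∀ k, T (k + 1) = T k ⊓ P (k + 1) := by
    intro k
    rw [hT]
    simp only
    rw [Finset.range_add_one, Finset.inf_insert, inf_comm]
  have hrank : ∀ k, s ≤ finrank F ↥(T k) + k := by
    intro k
    induction k with
    | zero =>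
      rw [hT0, hs]
      omega
    | succ k ih =>
      haveI := hTfin k
      have hstep : finrank F ↥(T k) ≤ finrank F ↥(T k ⊓ P (k + 1)) + 1 := by
        refine aux_step (T k) S (A * S) (LinearMap.mulLeft F (a ^ (k + 1))) hSAS ?_ ?_
        · intro x hx
          have hx' : a ^ k * x ∈ S := hTle k k le_rfl hx
          have : (a ^ (k + 1)) * x = a * (a ^ k * x) := by ring
          rw [LinearMap.mulLeft_apply, this]
          exact Submodule.mul_mem_mul haA hx'
        · rw [hAS, hs]
      rw [← hTsucc k] at hstep
      omega
  -- extract g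
  have hTne : T (s - 1) ≠ ⊥ := by
    intro hbot
    have := hrank (s - 1)
    rw [hbot, finrank_bot] at this
    omega
  obtain ⟨g, hgT, hg0⟩ := Submodule.exists_mem_ne_zero_of_ne_bot hTne
  have hgS : ∀ i : Fin s, g * a ^ (i : ℕ) ∈ S := by
    intro i
    have hi : (i : ℕ) ≤ s - 1 := by omega
    have := hTle (s - 1) i hi hgT
    rw [hP, Submodule.mem_comap, LinearMap.mulLeft_apply] at this
    rwa [mul_comm]
  -- linear independence of g * a^i
  have hv : LinearIndependent F fun i : Fin s => g * a ^ (i : ℕ) := by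
    have hinj : LinearMap.ker (LinearMap.mulLeft F g) = ⊥ := by
      rw [LinearMap.ker_eq_bot]
      intro x y hxy
      simp only [LinearMap.mulLeft_apply] at hxy
      exact mul_left_cancel₀ hg0 hxy
    have := hpow.map' (LinearMap.mulLeft F g) hinj
    exact this
  set w : Fin s → ↥S := fun i => ⟨g * a ^ (i : ℕ), hgS i⟩ with hw
  have hwli : LinearIndependent F w := by
    apply LinearIndependent.of_comp S.subtype
    convert hv
    rfl
  haveI : Nonempty (Fin s) := ⟨⟨0, by omega⟩⟩
  have hcard : Fintype.card (Fin s) = finrank F ↥S := by simp [hs]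
  refine ⟨g, by simpa using hgS ⟨0, by omega⟩,
    basisOfLinearIndependentOfCardEqFinrank hwli hcard, fun i => ?_⟩
  rw [coe_basisOfLinearIndependentOfCardEqFinrank]
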